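/- Let k and ℓ be integers with 3 ≤ k ≤ ℓ and let G_{k,ℓ} be the graph described in the context. Then for every choice of vertices x_i ∈ {t_{i,1}, t_{i,2}} for i = k,…,k+ℓ−2, the set {v, x_k,…,x_{k+ℓ−2}} is a total dominating set of G_{k,ℓ} of cardinality ℓ. -/
import Mathlib


/-- Vertices of `G_{k,ℓ}`: triangle vertices `t_{i,j}` as `Sum.inl (i,j)`
(0-indexed, `i : Fin (k+ℓ-2)`, `j : Fin 3`), and `u = Sum.inr false`,
`v = Sum.inr true`. -/
abbrev GklV (k l : ℕ) := (Fin (k + l - 2) × Fin 3) ⊕ Bool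

/-- Edge relation of `G_{k,ℓ}`: triangles on each `t_{i,·}`; `u` adjacent to
`t_{i,1}` for `i ≤ k-1` (0-indexed `i.val < k-1`, `j = 0`) and to all `t_{i,j}`
for `i ≥ k` (0-indexed `k-1 ≤ i.val`); `v` adjacent to all `t_{i,j}` for
`i ≤ k-1` and to `t_{i,1}`, `t_{i,2}` for `i ≥ k`; `u` and `v` nonadjacent. -/
def GklRel (k l : ℕ) : GklV k l → GklV k l → Prop
  | .inl p, .inl q => p.1 = q.1
  | .inr false, .inl p => (p.1.val < k - 1 ∧ p.2.val = 0) ∨ k - 1 ≤ p.1.val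
  | .inr true, .inl p =>
      p.1.val < k - 1 ∨ (k - 1 ≤ p.1.val ∧ (p.2.val = 0 ∨ p.2.val = 1))
  | _, _ => False

/-- The graph `G_{k,ℓ}`. -/
def Gkl (k l : ℕ) : SimpleGraph (GklV k l) := SimpleGraph.fromRel (GklRel k l)

/-- `D` is a total dominating set of `G`. -/
def IsTotalDomSet {V : Type*} (G : SimpleGraph V) (D : Finset V) : Prop :=
  ∀ v : V, ∃ d ∈ D, G.Adj v d

/-- For every choice `x_i ∈ {t_{i,1}, t_{i,2}}` for `i = k, …, k+ℓ-2`
(0-indexed `k-1 ≤ i.val`), the set `{v, x_k, …, x_{k+ℓ-2}}` is a total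
dominating set of `G_{k,ℓ}` of cardinality `ℓ`. -/
theorem stmt10 (k l : ℕ) (hk : 3 ≤ k) (hkl : k ≤ l)
    (c : Fin (k + l - 2) → Fin 3)
    (hc : ∀ i, k - 1 ≤ i.val → (c i).val = 0 ∨ (c i).val = 1)
    (D : Finset (GklV k l))
    (hDdef : D = insert (Sum.inr true)
      (Finset.image (fun i => Sum.inl (i, c i))
        (Finset.univ.filter (fun i : Fin (k + l - 2) => k - 1 ≤ i.val)))) :
    IsTotalDomSet (Gkl k l) D ∧ D.card = l := by
  subst hDdef
  have hn : k - 1 < k + l - 2 := by omega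
  set i0 : Fin (k + l - 2) := ⟨k - 1, hn⟩ with hi0
  have hi0le : k - 1 ≤ i0.val := le_rfl
  have hmem : ∀ i : Fin (k + l - 2), k - 1 ≤ i.val →
      (Sum.inl (i, c i) : GklV k l) ∈ insert (Sum.inr true)
        (Finset.image (fun i => Sum.inl (i, c i))
          (Finset.univ.filter (fun i : Fin (k + l - 2) => k - 1 ≤ i.val))) := by
    intro i hi
    refine Finset.mem_insert_of_mem ?_
    simp only [Finset.mem_image, Finset.mem_filter, Finset.mem_univ, true_and]
    exact ⟨i, hi, rfl⟩
  have hvmem : (Sum.inr true : GklV k l) ∈ insert (Sum.inr true)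
        (Finset.image (fun i => Sum.inl (i, c i))
          (Finset.univ.filter (fun i : Fin (k + l - 2) => k - 1 ≤ i.val))) :=
    Finset.mem_insert_self _ _
  constructor
  · intro w
    match w with
    | .inr true =>
        refine ⟨Sum.inl (i0, c i0), hmem i0 hi0le, ?_⟩
        rw [Gkl, SimpleGraph.fromRel_adj]
        exact ⟨by simp, Or.inl (Or.inr ⟨hi0le, hc i0 hi0le⟩)⟩
    | .inr false =>
        refine ⟨Sum.inl (i0, c i0), hmem i0 hi0le, ?_⟩
        rw [Gkl, SimpleGraph.fromRel_adj]
        exact ⟨by simp, Or.inl (Or.inr hi0le)⟩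
    | .inl (i, j) =>
        by_cases hi : k - 1 ≤ i.val
        · by_cases hj : j = c i
          · refine ⟨Sum.inr true, hvmem, ?_⟩
            rw [Gkl, SimpleGraph.fromRel_adj]
            refine ⟨by simp, Or.inr (Or.inr ⟨hi, ?_⟩)⟩
            subst hj
            exact hc i hi
          · refine ⟨Sum.inl (i, c i), hmem i hi, ?_⟩
            rw [Gkl, SimpleGraph.fromRel_adj]
            refine ⟨?_, Or.inl rfl⟩
            simp only [ne_eq, Sum.inl.injEq, Prod.mk.injEq]
            exact fun h => hj h.2
        · refine ⟨Sum.inr true, hvmem, ?_⟩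
          rw [Gkl, SimpleGraph.fromRel_adj]
          exact ⟨by simp, Or.inr (Or.inl (Nat.lt_of_not_le hi))⟩
  · have hnotin : (Sum.inr true : GklV k l) ∉
        Finset.image (fun i => Sum.inl (i, c i))
          (Finset.univ.filter (fun i : Fin (k + l - 2) => k - 1 ≤ i.val)) := by
      simp
    rw [Finset.card_insert_of_notMem hnotin, Finset.card_image_of_injective _
      (fun a b h => by injection h with h'; exact congrArg Prod.fst h')]
    have hfe : (Finset.univ.filter (fun i : Fin (k + l - 2) => k - 1 ≤ i.val))
        = Finset.Ici i0 := by
      ext x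
      simp [Fin.le_def, hi0]
    rw [hfe, Fin.card_Ici]
    simp only [hi0]
    omega
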